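/- There exists a unique family of symmetric functions {h̃_λ}, indexed by all integer partitions λ, satisfying h_λ = Σ_π h̃_{m̃(π)} for every partition λ, where the sum runs over all multiset partitions π of {1^{λ_1}, 2^{λ_2}, …, ℓ^{λ_ℓ}}; moreover each h̃_λ has top homogeneous component h_λ (i.e., h̃_λ = h_λ minus a linear combination of h̃_{m̃(π)} with |m̃(π)| < |λ|), and the family {h̃_λ} is a linear basis of the ring of symmetric functions over ℚ. -/

import Mathlib

open scoped BigOperators

noncomputable section

/-- The ring of symmetric functions over `ℚ`, realized as the free commutative
`ℚ`-algebra on the power sums `p_1, p_2, p_3, …`. -/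
abbrev SymF : Type := MvPolynomial ℕ+ ℚ

/-- The power sum symmetric function `p_k`. -/
def pp (k : ℕ+) : SymF := MvPolynomial.X k

/-- `p_μ = p_{μ_1} p_{μ_2} ⋯` for a partition `μ` (a multiset of positive parts). -/
def pProd (mu : Multiset ℕ+) : SymF := (mu.map pp).prod

/-- The size `|μ|` of a partition. -/
def psize (mu : Multiset ℕ+) : ℕ := (mu.map (fun i => (i : ℕ))).sum

/-- The largest part `μ_1` of a partition (0 for the empty partition). -/
def maxPart (mu : Multiset ℕ+) : ℕ := (mu.map (fun i => (i : ℕ))).sup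

/-- `z_μ = ∏_i m_i(μ)! · i^{m_i(μ)}`. -/
def zMult (mu : Multiset ℕ+) : ℕ :=
  (mu.map (fun i => (i : ℕ))).prod * ∏ i ∈ mu.toFinset, (mu.count i).factorial

/-- `Ξ_μ` : the multiset of eigenvalues of a permutation matrix of cycle type `μ`,
i.e. the multiset union over all parts `μ_i` of all `μ_i`-th roots of unity. -/
def Xi (mu : Multiset ℕ+) : Multiset ℂ :=
  mu.bind (fun k => (Multiset.range (k : ℕ)).map
    (fun j => Complex.exp (2 * (Real.pi : ℂ) * Complex.I * (j : ℂ) / ((k : ℕ) : ℂ))))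

/-- Evaluation `f[Ξ_μ]` of a symmetric function at the eigenvalues of a permutation
matrix of cycle type `μ` : substitute each power sum `p_k` by the `k`-th power sum of
the members of the multiset `Ξ_μ`. -/
def evalXi (mu : Multiset ℕ+) (f : SymF) : ℂ :=
  MvPolynomial.aeval (fun k : ℕ+ => ((Xi mu).map (fun x => x ^ (k : ℕ))).sum) f

/-- The complete homogeneous symmetric function `h_n = Σ_{μ ⊢ n} p_μ / z_μ`. -/
def hn (n : ℕ) : SymF :=
  ∑ᶠ mu ∈ {mu : Multiset ℕ+ | psize mu = n}, ((zMult mu : ℚ))⁻¹ • pProd mu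

/-- `h_λ = h_{λ_1} h_{λ_2} ⋯`. -/
def hProd (lam : Multiset ℕ+) : SymF := (lam.map (fun i => hn (i : ℕ))).prod

/-- `h_a` for an integer index, with `h_a = 0` for `a < 0`. -/
def hZ (a : ℤ) : SymF := if 0 ≤ a then hn a.toNat else 0

/-- `h_l = h_{l_1} ⋯ h_{l_r}` for a list of row lengths. -/
def hOfList (l : List ℕ) : SymF := (l.map hn).prod

/-- `z` of an exponent vector: the monomial `∏ p_k^{d_k}` is `p_γ` where `γ` has
`d_k` parts equal to `k`, and `zMon d = z_γ`. -/
def zMon (d : ℕ+ →₀ ℕ) : ℚ :=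
  ∏ k ∈ d.support, ((d k).factorial : ℚ) * ((k : ℕ) : ℚ) ^ (d k)

/-- The Hall inner product on `SymF`, determined by `⟨p_γ, p_δ⟩ = δ_{γδ} z_γ`. -/
def hall (f g : SymF) : ℚ :=
  ∑ d ∈ f.support, f.coeff d * g.coeff d * zMon d

/-- The Schur function indexed by a list of row lengths, via the Jacobi–Trudi
determinant `s_α = det(h_{α_i - i + j})`. -/
def schurOfList (l : List ℕ) : SymF :=
  (Matrix.of (fun i j : Fin l.length => hZ ((l.get i : ℤ) + (j : ℤ) - (i : ℤ)))).det

/-- The irreducible symmetric group character `χ^α(γ) = ⟨s_α, p_γ⟩`. -/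
def chi (l : List ℕ) (gamma : Multiset ℕ+) : ℚ := hall (schurOfList l) (pProd gamma)

/-- The degree of a symmetric function (the power sum `p_k` having degree `k`). -/
def symDeg (f : SymF) : ℕ :=
  MvPolynomial.weightedTotalDegree (fun k : ℕ+ => (k : ℕ)) f

/-- The parts of a partition, sorted decreasingly `(λ_1, λ_2, …)`. -/
def toList (lam : Multiset ℕ+) : List ℕ :=
  ((lam.map (fun i => (i : ℕ))).sort (· ≤ ·)).reverse

/-- The content multiset `{1^{λ_1}, 2^{λ_2}, …, ℓ^{λ_ℓ}}` of a partition. -/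
def contentMultiset (lam : Multiset ℕ+) : Multiset ℕ :=
  ((toList lam).zipIdx.flatMap (fun ia => List.replicate ia.1 (ia.2 + 1)) : List ℕ)

/-- `π` is a multiset partition of the multiset `S`: a multiset of nonempty
multisets whose multiset union is `S`. -/
def IsMSP (pi : Multiset (Multiset ℕ)) (S : Multiset ℕ) : Prop :=
  (0 : Multiset ℕ) ∉ pi ∧ pi.sum = S

/-- `m̃(π)`: the partition of `ℓ(π)` recording the multiplicities with which the
distinct blocks occur in the multiset partition `π`. -/
def mtilde (pi : Multiset (Multiset ℕ)) : Multiset ℕ+ :=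
  pi.toFinset.val.map (fun B => (pi.count B).toPNat')

/-- The defining relation of the induced trivial character basis `h̃`:
`h_λ = Σ_{π ⊩ {1^{λ_1},…,ℓ^{λ_ℓ}}} h̃_{m̃(π)}` for every partition `λ`. -/
def HTdef (ht : Multiset ℕ+ → SymF) : Prop :=
  ∀ lam : Multiset ℕ+,
    hProd lam =
      ∑ᶠ pi ∈ {pi : Multiset (Multiset ℕ) | IsMSP pi (contentMultiset lam)},
        ht (mtilde pi)

/-- The defining property of the irreducible character basis `s̃` : each `s̃_λ` has
degree `|λ|` and satisfies `s̃_λ[Ξ_γ] = χ^{(|γ|-|λ|,λ)}(γ)` whenever `|γ| ≥ |λ|+λ_1`. -/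
def STdef (st : Multiset ℕ+ → SymF) : Prop :=
  ∀ lam : Multiset ℕ+,
    symDeg (st lam) = psize lam ∧
    ∀ gamma : Multiset ℕ+, psize lam + maxPart lam ≤ psize gamma →
      evalXi gamma (st lam) =
        ((chi ((psize gamma - psize lam) :: toList lam) gamma : ℚ) : ℂ)

namespace ITCB

open Multiset MvPolynomial

/-! ### basic psize lemmas -/

lemma psize_cons (a : ℕ+) (mu : Multiset ℕ+) : psize (a ::ₘ mu) = (a : ℕ) + psize mu := by
  simp [psize]

lemma card_le_psize (mu : Multiset ℕ+) : Multiset.card mu ≤ psize mu := by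
  have h : ∀ x ∈ mu.map (fun i : ℕ+ => (i : ℕ)), 1 ≤ x := by
    rintro x hx
    obtain ⟨i, _, rfl⟩ := Multiset.mem_map.1 hx
    exact i.one_le
  have := Multiset.card_nsmul_le_sum h
  simpa [psize] using this

lemma mem_le_psize {i : ℕ+} {mu : Multiset ℕ+} (h : i ∈ mu) : (i : ℕ) ≤ psize mu := by
  have hm : (i : ℕ) ∈ mu.map (fun i : ℕ+ => (i : ℕ)) :=
    Multiset.mem_map.2 ⟨i, h, rfl⟩
  have h2 := Multiset.le_sum_of_mem hm
  simpa [psize] using h2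

lemma psize_eq_zero {mu : Multiset ℕ+} (h : psize mu = 0) : mu = 0 := by
  by_contra hne
  obtain ⟨i, hi⟩ := Multiset.exists_mem_of_ne_zero hne
  have h1 := mem_le_psize hi
  have h2 : 0 < (i : ℕ) := i.2
  omega

/-! ### finiteness -/

lemma finite_le {α : Type*} (t : Multiset α) : {s : Multiset α | s ≤ t}.Finite := by
  classical
  apply Set.Finite.subset t.powerset.toFinset.finite_toSet
  intro s hs
  simpa [Multiset.mem_powerset] using hs

lemma finite_psize (n : ℕ) : {mu : Multiset ℕ+ | psize mu = n}.Finite := by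
  classical
  apply Set.Finite.subset
    (finite_le (n • ((Multiset.range n).map (fun i => (⟨i + 1, Nat.succ_pos i⟩ : ℕ+)))))
  intro mu hmu
  simp only [Set.mem_setOf_eq] at hmu ⊢
  rw [Multiset.le_iff_count]
  intro k
  rw [Multiset.count_nsmul]
  by_cases hk : k ∈ mu
  · have h1 : Multiset.count k mu ≤ n := le_trans (Multiset.count_le_card _ _)
      (hmu ▸ card_le_psize mu)
    have hkn : (k : ℕ) ≤ n := hmu ▸ mem_le_psize hk
    have h2 : k ∈ (Multiset.range n).map (fun i => (⟨i + 1, Nat.succ_pos i⟩ : ℕ+)) := by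
      refine Multiset.mem_map.2 ⟨(k : ℕ) - 1, Multiset.mem_range.2 ?_, ?_⟩
      · have hk1 : 0 < (k : ℕ) := k.2; omega
      · apply Subtype.ext
        have hk1 : 0 < (k : ℕ) := k.2
        show (k : ℕ) - 1 + 1 = (k : ℕ)
        omega
    have h3 : 1 ≤ Multiset.count k ((Multiset.range n).map
        (fun i => (⟨i + 1, Nat.succ_pos i⟩ : ℕ+))) := Multiset.count_pos.2 h2
    calc Multiset.count k mu ≤ n := h1
      _ = n * 1 := (mul_one n).symm
      _ ≤ n * _ := Nat.mul_le_mul_left n h3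
  · simp [Multiset.count_eq_zero_of_notMem hk]

lemma card_msum {α : Type*} (s : Multiset (Multiset α)) :
    Multiset.card s.sum = (s.map Multiset.card).sum := by
  induction s using Multiset.induction_on with
  | empty => simp
  | cons a s ih => simp [ih]

lemma card_le_sum_blocks {pi : Multiset (Multiset ℕ)} (h0 : (0 : Multiset ℕ) ∉ pi) :
    Multiset.card pi ≤ (pi.map Multiset.card).sum := by
  have h : ∀ x ∈ pi.map Multiset.card, 1 ≤ x := by
    rintro x hx
    obtain ⟨B, hB, rfl⟩ := Multiset.mem_map.1 hx
    have : B ≠ 0 := fun hB0 => h0 (hB0 ▸ hB)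
    have : Multiset.card B ≠ 0 := by simpa [Multiset.card_eq_zero]
    omega
  have := Multiset.card_nsmul_le_sum h
  simpa using this

lemma card_le_of_MSP {pi : Multiset (Multiset ℕ)} {S : Multiset ℕ} (h : IsMSP pi S) :
    Multiset.card pi ≤ Multiset.card S := by
  have := card_le_sum_blocks h.1
  rw [← h.2, card_msum]
  exact this

lemma finite_MSP (S : Multiset ℕ) : {pi : Multiset (Multiset ℕ) | IsMSP pi S}.Finite := by
  classical
  apply Set.Finite.subset (finite_le ((Multiset.card S) • S.powerset))
  intro pi hpi
  simp only [Set.mem_setOf_eq] at hpi ⊢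
  rw [Multiset.le_iff_count]
  intro B
  rw [Multiset.count_nsmul]
  by_cases hB : B ∈ pi
  · have h1 : Multiset.count B pi ≤ Multiset.card S :=
      le_trans (Multiset.count_le_card _ _) (card_le_of_MSP hpi)
    have h2 : B ∈ S.powerset := Multiset.mem_powerset.2 (hpi.2 ▸ Multiset.le_sum_of_mem hB)
    have h3 : 1 ≤ Multiset.count B S.powerset := Multiset.count_pos.2 h2
    calc Multiset.count B pi ≤ Multiset.card S := h1
      _ = Multiset.card S * 1 := (mul_one _).symm
      _ ≤ _ := Nat.mul_le_mul_left _ h3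
  · simp [Multiset.count_eq_zero_of_notMem hB]


/-! ### counts -/

def counts {α : Type*} [DecidableEq α] (c : Multiset α) : Multiset ℕ :=
  c.toFinset.val.map (fun a => c.count a)

lemma counts_sum {α : Type*} [DecidableEq α] (c : Multiset α) :
    (counts c).sum = Multiset.card c := by
  have : (counts c).sum = ∑ a ∈ c.toFinset, c.count a := by
    rw [Finset.sum_eq_multiset_sum, counts]
  rw [this, Multiset.toFinset_sum_count_eq]

lemma counts_add {α : Type*} [DecidableEq α] {c d : Multiset α}
    (h : ∀ a ∈ c, a ∉ d) : counts (c + d) = counts c + counts d := by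
  classical
  have hdisj : Disjoint c.toFinset d.toFinset := by
    rw [Finset.disjoint_left]
    intro a hac had
    exact h a (by simpa using hac) (by simpa using had)
  rw [counts, counts, counts, Multiset.toFinset_add,
    ← Finset.disjUnion_eq_union _ _ hdisj]
  show ((c.toFinset.val + d.toFinset.val).map _) = _
  rw [Multiset.map_add]
  congr 1
  · apply Multiset.map_congr rfl
    intro a ha
    have hac : a ∈ c := by simpa using ha
    rw [Multiset.count_add, Multiset.count_eq_zero_of_notMem (h a hac), add_zero]
  · apply Multiset.map_congr rfl
    intro a ha
    have had : a ∈ d := by simpa using ha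
    have hnac : a ∉ c := fun hac => h a hac had
    rw [Multiset.count_add, Multiset.count_eq_zero_of_notMem hnac, zero_add]

lemma counts_replicate {a : ℕ} (m : ℕ) (ha : a ≠ 0) :
    counts (Multiset.replicate a m) = {a} := by
  rw [counts, Multiset.toFinset_replicate, if_neg ha]
  show ({m} : Finset ℕ).val.map _ = _
  simp [Multiset.count_replicate_self]

/-! ### content multiset -/

def contentList (L : List ℕ) : Multiset ℕ :=
  (L.zipIdx.flatMap (fun ia => List.replicate ia.1 (ia.2 + 1)) : List ℕ)

lemma mem_contentList_le {L : List ℕ} {x : ℕ} (hx : x ∈ contentList L) : x ≤ L.length := by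
  rw [contentList, Multiset.mem_coe] at hx
  obtain ⟨ia, hia, hxx⟩ := List.mem_flatMap.1 hx
  have hx1 := List.eq_of_mem_replicate hxx
  have h2 : L[ia.2]? = some ia.1 := List.mem_zipIdx_iff_getElem?.1 hia
  have h3 : ia.2 < L.length := by
    by_contra hc
    rw [List.getElem?_eq_none (by omega)] at h2
    cases h2
  omega

lemma counts_contentList : ∀ (L : List ℕ), (∀ x ∈ L, 0 < x) →
    counts (contentList L) = (L : Multiset ℕ) := by
  intro L
  induction L using List.reverseRecOn with
  | nil => intro _; simp [contentList, counts]
  | append_singleton L a ih =>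
    intro hpos
    have hL : ∀ x ∈ L, 0 < x := fun x hx => hpos x (by simp [hx])
    have ha : 0 < a := hpos a (by simp)
    have hsplit : contentList (L ++ [a]) =
        contentList L + Multiset.replicate a (L.length + 1) := by
      rw [contentList, contentList, List.zipIdx_append, List.flatMap_append]
      show ((_ ++ _ : List ℕ) : Multiset ℕ) = _
      rw [← Multiset.coe_add]
      congr 1
      show ((List.zipIdx [a] (0 + L.length)).flatMap
        (fun ia => List.replicate ia.1 (ia.2 + 1)) : Multiset ℕ) = _
      simp [Multiset.coe_replicate]
    rw [hsplit, counts_add, ih hL, counts_replicate _ (by omega)]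
    · show _ = ((L ++ [a] : List ℕ) : Multiset ℕ)
      rw [← Multiset.coe_add]
      rfl
    · intro x hx hmem
      have h1 := mem_contentList_le hx
      have h2 := Multiset.eq_of_mem_replicate hmem
      omega

lemma psize_coe (mu : Multiset ℕ+) :
    psize mu = (Multiset.map (fun i : ℕ+ => (i : ℕ)) mu).sum := by
  simp [psize]

lemma toList_coe (lam : Multiset ℕ+) :
    ((_root_.toList lam : List ℕ) : Multiset ℕ) = Multiset.map (fun i : ℕ+ => (i : ℕ)) lam := by
  rw [_root_.toList, Multiset.coe_reverse, Multiset.sort_eq]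
  simp

lemma toList_pos (lam : Multiset ℕ+) : ∀ x ∈ _root_.toList lam, 0 < x := by
  intro x hx
  have hx' : x ∈ ((_root_.toList lam : List ℕ) : Multiset ℕ) := Multiset.mem_coe.2 hx
  rw [toList_coe] at hx'
  obtain ⟨i, _, rfl⟩ := Multiset.mem_map.1 hx'
  exact i.2

lemma counts_content (lam : Multiset ℕ+) :
    counts (contentMultiset lam) = Multiset.map (fun i : ℕ+ => (i : ℕ)) lam := by
  have h : contentMultiset lam = contentList (_root_.toList lam) := rfl
  rw [h, counts_contentList _ (toList_pos lam), toList_coe]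

lemma card_content (lam : Multiset ℕ+) :
    Multiset.card (contentMultiset lam) = psize lam := by
  rw [← counts_sum, counts_content, psize_coe]

/-! ### mtilde -/

lemma mtilde_coe (pi : Multiset (Multiset ℕ)) :
    (mtilde pi).map (fun i : ℕ+ => (i : ℕ)) = counts pi := by
  rw [mtilde, counts, Multiset.map_map]
  apply Multiset.map_congr rfl
  intro B hB
  have hBpi : B ∈ pi := by
    rw [← Multiset.mem_toFinset]
    exact hB
  have hpos : 0 < pi.count B := Multiset.count_pos.2 hBpi
  show ((pi.count B).toPNat' : ℕ) = pi.count B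
  simp [Nat.toPNat']
  omega

lemma psize_mtilde (pi : Multiset (Multiset ℕ)) :
    psize (mtilde pi) = Multiset.card pi := by
  rw [psize_coe, mtilde_coe, counts_sum]

def sings (S : Multiset ℕ) : Multiset (Multiset ℕ) := S.map (fun a => ({a} : Multiset ℕ))

lemma isMSP_sings (S : Multiset ℕ) : IsMSP (sings S) S := by
  constructor
  · intro h
    obtain ⟨a, _, ha⟩ := Multiset.mem_map.1 h
    exact Multiset.singleton_ne_zero a ha
  · exact Multiset.sum_map_singleton S

lemma counts_sings (S : Multiset ℕ) : counts (sings S) = counts S := by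
  classical
  have hinj : Function.Injective (fun a : ℕ => ({a} : Multiset ℕ)) := by
    intro a b hab
    simpa using hab
  rw [sings, counts, counts, Multiset.toFinset_map,
    Finset.image_val_of_injOn (hinj.injOn), Multiset.map_map]
  apply Multiset.map_congr rfl
  intro a _
  exact Multiset.count_map_eq_count' _ _ hinj a

lemma mtilde_sings_content (lam : Multiset ℕ+) :
    mtilde (sings (contentMultiset lam)) = lam := by
  apply Multiset.map_injective (f := fun i : ℕ+ => (i : ℕ))
    (fun a b h => PNat.coe_injective h)
  rw [mtilde_coe, counts_sings, counts_content]


/-! ### structure of multiset partitions -/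

lemma eq_sings_of_all_singleton {pi : Multiset (Multiset ℕ)}
    (h : ∀ B ∈ pi, Multiset.card B = 1) : pi = sings pi.sum := by
  induction pi using Multiset.induction_on with
  | empty => simp [sings]
  | cons B pi ih =>
    obtain ⟨b, rfl⟩ := Multiset.card_eq_one.1 (h B (Multiset.mem_cons_self B pi))
    have ih' := ih (fun B hB => h B (Multiset.mem_cons_of_mem hB))
    rw [Multiset.sum_cons, sings, Multiset.singleton_add, Multiset.map_cons]
    rw [sings] at ih'
    rw [← ih']

lemma card_lt_of_MSP_ne {pi : Multiset (Multiset ℕ)} {S : Multiset ℕ}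
    (h : IsMSP pi S) (hne : pi ≠ sings S) : Multiset.card pi < Multiset.card S := by
  obtain ⟨h0, hsum⟩ := h
  by_cases hall : ∀ B ∈ pi, Multiset.card B = 1
  · exact absurd (by rw [eq_sings_of_all_singleton hall, hsum]) hne
  · push_neg at hall
    obtain ⟨B₀, hB₀, hcard⟩ := hall
    obtain ⟨rest, rfl⟩ := Multiset.exists_cons_of_mem hB₀
    have hB0ne : B₀ ≠ 0 := fun hB => h0 (by rw [hB]; exact Multiset.mem_cons_self _ _)
    have h2 : 2 ≤ Multiset.card B₀ := by
      have : Multiset.card B₀ ≠ 0 := by simpa [Multiset.card_eq_zero]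
      omega
    have hrest : Multiset.card rest ≤ (rest.map Multiset.card).sum :=
      card_le_sum_blocks (fun h => h0 (Multiset.mem_cons_of_mem h))
    have hS : Multiset.card S = Multiset.card B₀ + (rest.map Multiset.card).sum := by
      rw [← hsum, card_msum, Multiset.map_cons, Multiset.sum_cons]
    rw [hS, Multiset.card_cons]
    omega

/-! ### the finset of multiset partitions -/

def MSPF (S : Multiset ℕ) : Finset (Multiset (Multiset ℕ)) := (finite_MSP S).toFinset

lemma mem_MSPF {pi : Multiset (Multiset ℕ)} {S : Multiset ℕ} :
    pi ∈ MSPF S ↔ IsMSP pi S := by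
  rw [MSPF, Set.Finite.mem_toFinset]
  rfl

lemma sings_mem_MSPF (S : Multiset ℕ) : sings S ∈ MSPF S := mem_MSPF.2 (isMSP_sings S)

/-- The "proper" multiset partitions. -/
def EF (lam : Multiset ℕ+) : Finset (Multiset (Multiset ℕ)) :=
  (MSPF (contentMultiset lam)).erase (sings (contentMultiset lam))

lemma psize_mtilde_lt {lam : Multiset ℕ+} {pi : Multiset (Multiset ℕ)}
    (hpi : pi ∈ EF lam) : psize (mtilde pi) < psize lam := by
  rw [EF, Finset.mem_erase, mem_MSPF] at hpi
  rw [psize_mtilde, ← card_content lam]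
  exact card_lt_of_MSP_ne hpi.2 hpi.1

/-! ### the function `ht` -/

def ht (lam : Multiset ℕ+) : SymF :=
  hProd lam - ∑ pi ∈ (EF lam).attach, ht (mtilde pi.1)
termination_by psize lam
decreasing_by exact psize_mtilde_lt pi.2

lemma ht_spec (lam : Multiset ℕ+) :
    ht lam = hProd lam - ∑ pi ∈ EF lam, ht (mtilde pi) := by
  rw [ht]
  congr 1
  exact Finset.sum_attach (EF lam) (fun pi => ht (mtilde pi))

lemma sum_MSP (f : Multiset ℕ+ → SymF) (lam : Multiset ℕ+) :
    (∑ᶠ pi ∈ {pi : Multiset (Multiset ℕ) | IsMSP pi (contentMultiset lam)}, f (mtilde pi))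
      = ∑ pi ∈ MSPF (contentMultiset lam), f (mtilde pi) := by
  rw [← finsum_mem_coe_finset]
  congr 1
  rw [MSPF, Set.Finite.coe_toFinset]

lemma decomp (f : Multiset ℕ+ → SymF) (lam : Multiset ℕ+) :
    (∑ᶠ pi ∈ {pi : Multiset (Multiset ℕ) | IsMSP pi (contentMultiset lam)}, f (mtilde pi))
      = f lam + ∑ pi ∈ EF lam, f (mtilde pi) := by
  rw [sum_MSP, ← Finset.add_sum_erase _ _ (sings_mem_MSPF (contentMultiset lam)),
    mtilde_sings_content]
  rfl

lemma htdef_ht : HTdef ht := by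
  intro lam
  rw [decomp, ht_spec, sub_add_cancel]

lemma ht_eq_of_htdef {f : Multiset ℕ+ → SymF} (hf : HTdef f) (lam : Multiset ℕ+) :
    f lam = hProd lam - ∑ pi ∈ EF lam, f (mtilde pi) := by
  have h := hf lam
  rw [decomp] at h
  rw [h]
  ring

lemma htdef_unique {f g : Multiset ℕ+ → SymF} (hf : HTdef f) (hg : HTdef g) : f = g := by
  funext lam
  suffices H : ∀ n (lam : Multiset ℕ+), psize lam = n → f lam = g lam from H _ lam rfl
  intro n
  induction n using Nat.strong_induction_on with
  | _ n ih =>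
    intro lam hlam
    rw [ht_eq_of_htdef hf, ht_eq_of_htdef hg]
    congr 1
    apply Finset.sum_congr rfl
    intro pi hpi
    exact ih _ (hlam ▸ psize_mtilde_lt hpi) _ rfl


/-! ### degrees -/

def W (d : ℕ+ →₀ ℕ) : ℕ := ∑ k ∈ d.support, (k : ℕ) * d k

lemma W_def (d : ℕ+ →₀ ℕ) : W d = d.sum (fun k v => (k : ℕ) * v) := rfl

lemma W_add (d e : ℕ+ →₀ ℕ) : W (d + e) = W d + W e := by
  rw [W_def, W_def, W_def]
  exact Finsupp.sum_add_index' (fun a => by simp) (fun a b c => by ring)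

lemma W_single (a : ℕ+) : W (Finsupp.single a 1) = (a : ℕ) := by
  rw [W_def, Finsupp.sum_single_index] <;> simp

lemma W_toFinsupp (mu : Multiset ℕ+) : W mu.toFinsupp = psize mu := by
  induction mu using Multiset.induction_on with
  | empty => simp [W_def, psize]
  | cons a mu ih =>
    have h : (a ::ₘ mu).toFinsupp = Finsupp.single a 1 + mu.toFinsupp := by
      rw [← Multiset.singleton_add, Multiset.toFinsupp_add, Multiset.toFinsupp_singleton]
    rw [h, W_add, W_single, ih, psize_cons]

def DegLE (f : SymF) (n : ℕ) : Prop := ∀ d ∈ f.support, W d ≤ n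

lemma DegLE.mono {f : SymF} {m n : ℕ} (h : DegLE f m) (hmn : m ≤ n) : DegLE f n :=
  fun d hd => le_trans (h d hd) hmn

lemma DegLE.add {f g : SymF} {n : ℕ} (hf : DegLE f n) (hg : DegLE g n) :
    DegLE (f + g) n := by
  intro d hd
  rcases Finset.mem_union.1 (Finsupp.support_add hd) with h | h
  exacts [hf d h, hg d h]

lemma DegLE.neg {f : SymF} {n : ℕ} (hf : DegLE f n) : DegLE (-f) n := by
  intro d hd
  rw [MvPolynomial.mem_support_iff, MvPolynomial.coeff_neg, neg_ne_zero,
    ← MvPolynomial.mem_support_iff] at hd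
  exact hf d hd

lemma DegLE.sub {f g : SymF} {n : ℕ} (hf : DegLE f n) (hg : DegLE g n) :
    DegLE (f - g) n := by
  rw [sub_eq_add_neg]
  exact hf.add hg.neg

lemma DegLE.smul {f : SymF} {n : ℕ} (c : ℚ) (hf : DegLE f n) : DegLE (c • f) n :=
  fun d hd => hf d (MvPolynomial.support_smul hd)

lemma DegLE.sum {ι : Type*} {s : Finset ι} {F : ι → SymF} {n : ℕ}
    (h : ∀ i ∈ s, DegLE (F i) n) : DegLE (∑ i ∈ s, F i) n := by
  classical
  induction s using Finset.induction_on with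
  | empty => intro d hd; simp at hd
  | insert _ _ hx ih =>
    rename_i a s
    rw [Finset.sum_insert hx]
    exact (h a (Finset.mem_insert_self a s)).add
      (ih (fun i hi => h i (Finset.mem_insert_of_mem hi)))

lemma DegLE.mul {f g : SymF} {m n : ℕ} (hf : DegLE f m) (hg : DegLE g n) :
    DegLE (f * g) (m + n) := by
  classical
  intro d hd
  obtain ⟨a, ha, b, hb, rfl⟩ := Finset.mem_add.1 (MvPolynomial.support_mul f g hd)
  rw [W_add]
  exact add_le_add (hf a ha) (hg b hb)

lemma DegLE.one : DegLE (1 : SymF) 0 := by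
  intro d hd
  have h : d = 0 := by
    have := MvPolynomial.support_monomial (s := (0 : ℕ+ →₀ ℕ)) (a := (1 : ℚ))
    rw [MvPolynomial.monomial_zero'] at this
    simp only [MvPolynomial.C_1] at this
    rw [this] at hd
    simpa using hd
  simp [h, W_def]

lemma pProd_cons (a : ℕ+) (mu : Multiset ℕ+) : pProd (a ::ₘ mu) = pp a * pProd mu := by
  simp [pProd]

lemma pProd_monomial (mu : Multiset ℕ+) :
    pProd mu = MvPolynomial.monomial mu.toFinsupp 1 := by
  induction mu using Multiset.induction_on with
  | empty => simp [pProd]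
  | cons a mu ih =>
    rw [pProd_cons, ih, show pp a = MvPolynomial.monomial (Finsupp.single a 1) 1 by
      rw [MvPolynomial.monomial_eq, Finsupp.prod_single_index] <;> simp [pp],
      MvPolynomial.monomial_mul, one_mul,
      ← Multiset.singleton_add, Multiset.toFinsupp_add, Multiset.toFinsupp_singleton]

lemma degle_pProd (mu : Multiset ℕ+) : DegLE (pProd mu) (psize mu) := by
  rw [pProd_monomial]
  intro d hd
  rw [MvPolynomial.support_monomial, if_neg one_ne_zero] at hd
  rw [Finset.mem_singleton.1 hd]
  exact le_of_eq (W_toFinsupp mu)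

def PF (n : ℕ) : Finset (Multiset ℕ+) := (finite_psize n).toFinset

lemma mem_PF {mu : Multiset ℕ+} {n : ℕ} : mu ∈ PF n ↔ psize mu = n := by
  rw [PF, Set.Finite.mem_toFinset]
  rfl

lemma hn_eq (n : ℕ) : hn n = ∑ mu ∈ PF n, ((zMult mu : ℚ))⁻¹ • pProd mu := by
  rw [hn, ← finsum_mem_coe_finset]
  congr 1
  rw [PF, Set.Finite.coe_toFinset]

lemma degle_hn (n : ℕ) : DegLE (hn n) n := by
  rw [hn_eq]
  apply DegLE.sum
  intro mu hmu
  exact (DegLE.smul _ (degle_pProd mu)).mono (le_of_eq (mem_PF.1 hmu))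

lemma hProd_cons (a : ℕ+) (mu : Multiset ℕ+) :
    hProd (a ::ₘ mu) = hn (a : ℕ) * hProd mu := by
  simp [hProd]

lemma degle_hProd (lam : Multiset ℕ+) : DegLE (hProd lam) (psize lam) := by
  induction lam using Multiset.induction_on with
  | empty => simpa [hProd, psize] using DegLE.one
  | cons a mu ih =>
    rw [hProd_cons, psize_cons]
    exact (degle_hn (a : ℕ)).mul ih

lemma degle_ht (lam : Multiset ℕ+) : DegLE (ht lam) (psize lam) := by
  suffices H : ∀ n (lam : Multiset ℕ+), psize lam = n → DegLE (ht lam) (psize lam)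
    from H _ lam rfl
  intro n
  induction n using Nat.strong_induction_on with
  | _ n ih =>
    intro lam hlam
    rw [ht_spec]
    apply (degle_hProd lam).sub
    apply DegLE.sum
    intro pi hpi
    have hlt := psize_mtilde_lt hpi
    exact (ih _ (hlam ▸ hlt) _ rfl).mono (le_of_lt hlt)

lemma deglt_main (lam : Multiset ℕ+) :
    ∀ d ∈ (ht lam - hProd lam).support, W d < psize lam := by
  intro d hd
  have hrepr : ht lam - hProd lam = -∑ pi ∈ EF lam, ht (mtilde pi) := by
    rw [ht_spec]; ring
  rw [hrepr] at hd
  have hEF : (EF lam).Nonempty := by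
    by_contra hc
    rw [Finset.not_nonempty_iff_eq_empty] at hc
    rw [hc] at hd
    simp at hd
  obtain ⟨pi0, hpi0⟩ := hEF
  have h1 : 1 ≤ psize lam := lt_of_le_of_lt (Nat.zero_le _) (psize_mtilde_lt hpi0)
  have h2 : DegLE (∑ pi ∈ EF lam, ht (mtilde pi)) (psize lam - 1) := by
    apply DegLE.sum
    intro pi hpi
    exact (degle_ht (mtilde pi)).mono (by have := psize_mtilde_lt hpi; omega)
  have h3 := h2.neg d hd
  omega


/-! ### the inverse substitution `q` -/

lemma zMult_singleton (k : ℕ+) : zMult ({k} : Multiset ℕ+) = (k : ℕ) := by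
  simp [zMult]

lemma pProd_singleton (k : ℕ+) : pProd ({k} : Multiset ℕ+) = pp k := by
  simp [pProd]

lemma psize_singleton (k : ℕ+) : psize ({k} : Multiset ℕ+) = (k : ℕ) := by
  rw [psize_coe]; simp

lemma singleton_mem_PF (k : ℕ+) : ({k} : Multiset ℕ+) ∈ PF (k : ℕ) :=
  mem_PF.2 (psize_singleton k)

lemma parts_lt {mu : Multiset ℕ+} {k : ℕ+} (hmu : mu ∈ (PF (k : ℕ)).erase {k})
    {i : ℕ+} (hi : i ∈ mu) : (i : ℕ) < (k : ℕ) := by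
  rw [Finset.mem_erase, mem_PF] at hmu
  have hle : (i : ℕ) ≤ (k : ℕ) := hmu.2 ▸ mem_le_psize hi
  rcases lt_or_eq_of_le hle with h | h
  · exact h
  · exfalso
    obtain ⟨rest, rfl⟩ := Multiset.exists_cons_of_mem hi
    rw [psize_cons] at hmu
    have hrest : psize rest = 0 := by omega
    have : rest = 0 := psize_eq_zero hrest
    subst this
    have : i = k := PNat.coe_injective h
    subst this
    exact hmu.1 rfl

def q (k : ℕ+) : SymF :=
  ((k : ℕ) : ℚ) • pp k - ((k : ℕ) : ℚ) •
    ∑ mu ∈ ((PF (k : ℕ)).erase {k}).attach,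
      ((zMult mu.1 : ℚ))⁻¹ • ((mu.1).attach.map (fun i => q i.1)).prod
termination_by (k : ℕ)
decreasing_by exact parts_lt mu.2 i.2

def qProd (mu : Multiset ℕ+) : SymF := (mu.map q).prod

lemma q_spec (k : ℕ+) : q k = ((k : ℕ) : ℚ) • pp k - ((k : ℕ) : ℚ) •
    ∑ mu ∈ (PF (k : ℕ)).erase {k}, ((zMult mu : ℚ))⁻¹ • qProd mu := by
  rw [q]
  congr 1
  congr 1
  rw [← Finset.sum_attach ((PF (k : ℕ)).erase {k})
    (fun mu => ((zMult mu : ℚ))⁻¹ • qProd mu)]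
  apply Finset.sum_congr rfl
  intro mu _
  congr 1
  rw [qProd, ← Multiset.attach_map_val' (mu.1) q]

def φa : SymF →ₐ[ℚ] SymF := MvPolynomial.aeval (fun k : ℕ+ => hn (k : ℕ))
def ψa : SymF →ₐ[ℚ] SymF := MvPolynomial.aeval q

lemma aeval_pProd (F : ℕ+ → SymF) (mu : Multiset ℕ+) :
    MvPolynomial.aeval F (pProd mu) = (mu.map F).prod := by
  induction mu using Multiset.induction_on with
  | empty => simp [pProd]
  | cons a mu ih =>
    rw [pProd_cons, map_mul, ih, Multiset.map_cons, Multiset.prod_cons]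
    congr 1
    simp [pp]

lemma hn_split (k : ℕ+) : hn (k : ℕ) = (((k : ℕ) : ℚ))⁻¹ • pp k +
    ∑ mu ∈ (PF (k : ℕ)).erase {k}, ((zMult mu : ℚ))⁻¹ • pProd mu := by
  rw [hn_eq, ← Finset.add_sum_erase _ _ (singleton_mem_PF k), zMult_singleton,
    pProd_singleton]

lemma kQ_ne (k : ℕ+) : (((k : ℕ) : ℚ)) ≠ 0 := by
  have h : 0 < (k : ℕ) := k.2
  intro hc
  rw [Nat.cast_eq_zero] at hc
  omega

lemma phi_q (k : ℕ+) : φa (q k) = pp k := by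
  suffices H : ∀ n (k : ℕ+), (k : ℕ) ≤ n → φa (q k) = pp k from H _ k le_rfl
  intro n
  induction n with
  | zero => intro k hk; exfalso; have h : 0 < (k : ℕ) := k.2; omega
  | succ n ih =>
    intro k hk
    have hq : ∀ mu ∈ (PF (k : ℕ)).erase {k}, φa (qProd mu) = pProd mu := by
      intro mu hmu
      rw [qProd, pProd, map_multiset_prod, Multiset.map_map]
      congr 1
      apply Multiset.map_congr rfl
      intro i hi
      have hlt := parts_lt hmu hi
      exact ih i (by omega)
    rw [q_spec, map_sub, map_smul, map_smul, map_sum]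
    have hsum : ∀ mu ∈ (PF (k : ℕ)).erase {k},
        φa (((zMult mu : ℚ))⁻¹ • qProd mu) = ((zMult mu : ℚ))⁻¹ • pProd mu := by
      intro mu hmu
      rw [map_smul, hq mu hmu]
    rw [Finset.sum_congr rfl hsum]
    have hphiX : φa (pp k) = hn (k : ℕ) := by
      simp [φa, pp]
    rw [hphiX, hn_split k, smul_add, smul_smul,
      mul_inv_cancel₀ (kQ_ne k), one_smul, add_sub_cancel_right]

lemma psi_hn (k : ℕ+) : ψa (hn (k : ℕ)) = pp k := by
  have hpsisum : ∀ mu ∈ (PF (k : ℕ)).erase {k},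
      ψa (((zMult mu : ℚ))⁻¹ • pProd mu) = ((zMult mu : ℚ))⁻¹ • qProd mu := by
    intro mu _
    rw [map_smul, ψa, aeval_pProd, qProd]
  rw [hn_split, _root_.map_add, _root_.map_smul]
  have hX : ψa (pp k) = q k := by simp [ψa, pp]
  rw [hX, _root_.map_sum, Finset.sum_congr rfl hpsisum, q_spec, smul_sub, smul_smul,
    inv_mul_cancel₀ (kQ_ne k), one_smul, smul_smul, inv_mul_cancel₀ (kQ_ne k), one_smul,
    sub_add_cancel]

def eAlg : SymF ≃ₐ[ℚ] SymF :=
  AlgEquiv.ofAlgHom φa ψa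
    (by
      apply MvPolynomial.algHom_ext
      intro k
      show φa (ψa (MvPolynomial.X k)) = MvPolynomial.X k
      have hX : ψa (MvPolynomial.X k) = q k := by simp [ψa]
      rw [hX]
      exact phi_q k)
    (by
      apply MvPolynomial.algHom_ext
      intro k
      show ψa (φa (MvPolynomial.X k)) = MvPolynomial.X k
      have hX : φa (MvPolynomial.X k) = hn (k : ℕ) := by simp [φa]
      rw [hX]
      exact psi_hn k)

def e1 : (ℕ+ →₀ ℕ) ≃ Multiset ℕ+ := (Multiset.toFinsupp (α := ℕ+)).toEquiv.symm

def b0 : Module.Basis (Multiset ℕ+) ℚ SymF :=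
  ((MvPolynomial.basisMonomials ℕ+ ℚ).reindex e1).map eAlg.toLinearEquiv

lemma b0_apply (lam : Multiset ℕ+) : b0 lam = hProd lam := by
  rw [b0, Module.Basis.map_apply, Module.Basis.reindex_apply]
  have h1 : e1.symm lam = Multiset.toFinsupp lam := rfl
  rw [h1]
  have h2 : (MvPolynomial.basisMonomials ℕ+ ℚ) (Multiset.toFinsupp lam)
      = MvPolynomial.monomial (Multiset.toFinsupp lam) 1 := by
    rw [MvPolynomial.coe_basisMonomials]
  rw [h2, ← pProd_monomial]
  show φa (pProd lam) = hProd lam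
  rw [φa, aeval_pProd]
  simp [hProd]


/-! ### triangularity and the basis -/

def Vlt (n : ℕ) : Submodule ℚ SymF :=
  Submodule.span ℚ (hProd '' {mu : Multiset ℕ+ | psize mu < n})

lemma Vlt_mono {m n : ℕ} (h : m ≤ n) : Vlt m ≤ Vlt n :=
  Submodule.span_mono (Set.image_mono (fun mu hmu => lt_of_lt_of_le hmu h))

lemma ht_sub_hProd_mem (lam : Multiset ℕ+) : ht lam - hProd lam ∈ Vlt (psize lam) := by
  suffices H : ∀ n (lam : Multiset ℕ+), psize lam = n →
      ht lam - hProd lam ∈ Vlt (psize lam) from H _ lam rfl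
  intro n
  induction n using Nat.strong_induction_on with
  | _ n ih =>
    intro lam hlam
    have hrepr : ht lam - hProd lam = -∑ pi ∈ EF lam, ht (mtilde pi) := by
      rw [ht_spec]; ring
    rw [hrepr]
    apply Submodule.neg_mem
    apply Submodule.sum_mem
    intro pi hpi
    have hlt := psize_mtilde_lt hpi
    have h1 : ht (mtilde pi) - hProd (mtilde pi) ∈ Vlt (psize lam) :=
      Vlt_mono (le_of_lt hlt) (ih _ (hlam ▸ hlt) _ rfl)
    have h2 : hProd (mtilde pi) ∈ Vlt (psize lam) :=
      Submodule.subset_span ⟨mtilde pi, hlt, rfl⟩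
    have := Submodule.add_mem _ h1 h2
    simpa using this

lemma repr_lt {x : SymF} {n : ℕ} (hx : x ∈ Vlt n) :
    ∀ mu : Multiset ℕ+, b0.repr x mu ≠ 0 → psize mu < n := by
  have hle : Vlt n ≤ (Finsupp.supported ℚ ℚ {mu : Multiset ℕ+ | psize mu < n}).comap
      (b0.repr : SymF →ₗ[ℚ] (Multiset ℕ+ →₀ ℚ)) := by
    apply Submodule.span_le.2
    rintro _ ⟨mu', hmu', rfl⟩
    simp only [SetLike.mem_coe, Submodule.mem_comap, Finsupp.mem_supported]
    simp only [LinearEquiv.coe_coe]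
    rw [← b0_apply, b0.repr_self]
    intro x hx
    simp only [Finsupp.support_single_ne_zero _ one_ne_zero, Finset.coe_singleton,
      Set.mem_singleton_iff] at hx
    rw [hx]
    exact hmu'
  intro mu hmu
  have h := hle hx
  rw [Submodule.mem_comap, Finsupp.mem_supported] at h
  exact h (Finsupp.mem_support_iff.2 hmu)

lemma repr_ht_self (lam : Multiset ℕ+) : b0.repr (ht lam) lam = 1 := by
  have h : ht lam = (ht lam - hProd lam) + hProd lam := by ring
  rw [h, _root_.map_add, Finsupp.add_apply]
  have h1 : b0.repr (ht lam - hProd lam) lam = 0 := by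
    by_contra hc
    exact lt_irrefl _ (repr_lt (ht_sub_hProd_mem lam) lam hc)
  rw [h1, ← b0_apply, b0.repr_self, zero_add, Finsupp.single_eq_same]

lemma repr_ht_triangular {i lam : Multiset ℕ+} (hne : lam ≠ i)
    (hle : psize i ≤ psize lam) : b0.repr (ht i) lam = 0 := by
  have h : ht i = (ht i - hProd i) + hProd i := by ring
  rw [h, _root_.map_add, Finsupp.add_apply]
  have h1 : b0.repr (ht i - hProd i) lam = 0 := by
    by_contra hc
    have := repr_lt (ht_sub_hProd_mem i) lam hc
    omega
  have h2 : b0.repr (hProd i) lam = 0 := by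
    rw [← b0_apply, b0.repr_self]
    exact Finsupp.single_eq_of_ne (fun hc => hne hc)
  rw [h1, h2, add_zero]

lemma li_ht : LinearIndependent ℚ ht := by
  rw [linearIndependent_iff]
  intro l hl
  by_contra hne
  have hsupp : l.support.Nonempty := Finsupp.support_nonempty_iff.2 hne
  obtain ⟨lam, hlam, hmax⟩ := Finset.exists_max_image l.support psize hsupp
  have hco : b0.repr (Finsupp.linearCombination ℚ ht l) lam = l lam := by
    rw [Finsupp.linearCombination_apply, Finsupp.sum, _root_.map_sum,
      Finsupp.finset_sum_apply]
    rw [Finset.sum_eq_single lam]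
    · rw [_root_.map_smul, Finsupp.smul_apply, repr_ht_self, smul_eq_mul, mul_one]
    · intro i hi hine
      rw [_root_.map_smul, Finsupp.smul_apply,
        repr_ht_triangular (fun hc => hine hc.symm) (hmax i hi), smul_zero]
    · intro hnotmem
      exact absurd hlam hnotmem
  rw [hl] at hco
  simp only [_root_.map_zero, Finsupp.coe_zero, Pi.zero_apply] at hco
  exact (Finsupp.mem_support_iff.1 hlam) hco.symm

lemma span_ht : ⊤ ≤ Submodule.span ℚ (Set.range ht) := by
  rw [← b0.span_eq]
  apply Submodule.span_le.2
  rintro _ ⟨lam, rfl⟩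
  rw [b0_apply]
  have h : hProd lam = ∑ pi ∈ MSPF (contentMultiset lam), ht (mtilde pi) := by
    have h0 := htdef_ht lam
    rwa [sum_MSP] at h0
  rw [h]
  exact Submodule.sum_mem _ (fun pi _ => Submodule.subset_span ⟨_, rfl⟩)

def bHT : Module.Basis (Multiset ℕ+) ℚ SymF := Module.Basis.mk li_ht span_ht

lemma bHT_coe : ⇑bHT = ht := Module.Basis.coe_mk _ _

end ITCB

/-- There is a unique family `h̃` of symmetric functions satisfying
`h_λ = Σ_{π ⊩ {1^{λ_1},…,ℓ^{λ_ℓ}}} h̃_{m̃(π)}` for every partition `λ`; moreover each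
`h̃_λ` has top homogeneous component `h_λ` (every monomial of `h̃_λ - h_λ` has weighted
degree `< |λ|`), and the family `{h̃_λ}` is a linear basis of `Sym` over `ℚ`. -/
theorem existsUnique_inducedTrivialCharacterBasis :
    (∃! ht : Multiset ℕ+ → SymF, HTdef ht) ∧
    ∀ ht : Multiset ℕ+ → SymF, HTdef ht →
      (∀ lam : Multiset ℕ+, ∀ d ∈ (ht lam - hProd lam).support,
          ∑ k ∈ d.support, (k : ℕ) * d k < psize lam) ∧
      ∃ b : Module.Basis (Multiset ℕ+) ℚ SymF, ⇑b = ht := by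
  constructor
  · exact ⟨ITCB.ht, ITCB.htdef_ht, fun g hg => ITCB.htdef_unique hg ITCB.htdef_ht⟩
  · intro f hf
    have hfe : f = ITCB.ht := ITCB.htdef_unique hf ITCB.htdef_ht
    subst hfe
    constructor
    · intro lam d hd
      exact ITCB.deglt_main lam d hd
    · exact ⟨ITCB.bHT, ITCB.bHT_coe⟩

end
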